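/- For all 0 < s ≤ t < ∞, the Goursat–Volterra kernel k satisfies the self-reproduction property k(t,s) = ∫_t^∞ k(u,t)·k(u,s) du + f(t)ᵀ·α_∞·f(s), where the improper integral converges. -/

import Mathlib

open MeasureTheory Filter Topology Matrix Set

section GV
variable {n : ℕ}
  {f : ℝ → Fin n → ℝ}
  {m : ℝ → Matrix (Fin n) (Fin n) ℝ}
  {α : ℝ → Matrix (Fin n) (Fin n) ℝ}
  (hf_meas : ∀ i, Measurable fun s => f s i)
  (hf_loc : ∀ i, ∀ t > (0 : ℝ), IntegrableOn (fun s => (f s i) ^ 2) (Set.Ioc 0 t))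
  (hm : ∀ t, m t = Matrix.of fun i j => ∫ s in Set.Ioc 0 t, f s i * f s j)
  (hm_inv : ∀ t > (0 : ℝ), IsUnit (m t))
  (hα : ∀ t, α t = (m t)⁻¹)

include hf_meas hf_loc in
lemma ff_int (i j : Fin n) {b : ℝ} (hb : 0 < b) :
    IntegrableOn (fun w => f w i * f w j) (Set.Ioc 0 b) := by
  have h1 := hf_loc i b hb
  have h2 := hf_loc j b hb
  refine Integrable.mono' (((h1.add h2)).div_const 2) ?_ ?_
  · exact ((hf_meas i).mul (hf_meas j)).aestronglyMeasurable
  · refine Filter.Eventually.of_forall fun w => ?_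
    rw [Real.norm_eq_abs, abs_mul]
    simp only [Pi.add_apply]
    nlinarith [abs_nonneg (f w i), abs_nonneg (f w j), sq_abs (f w i), sq_abs (f w j),
      sq_nonneg (|f w i| - |f w j|)]

include hf_meas hf_loc in
lemma ff_ii (i j : Fin n) {c d : ℝ} (hc : 0 ≤ c) (hcd : c ≤ d) :
    IntervalIntegrable (fun w => f w i * f w j) volume c d := by
  rcases eq_or_lt_of_le (hc.trans hcd) with h | h
  · have hcd' : c = d := le_antisymm hcd (h ▸ hc)
    subst hcd'
    exact IntervalIntegrable.refl
  · rw [intervalIntegrable_iff_integrableOn_Ioc_of_le hcd]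
    exact (ff_int hf_meas hf_loc i j h).mono_set (Ioc_subset_Ioc_left hc)

include hm in
lemma m_eq (i j : Fin n) {e : ℝ} (he : 0 ≤ e) :
    m e i j = ∫ w in (0:ℝ)..e, f w i * f w j := by
  rw [hm, intervalIntegral.integral_of_le he]; rfl

include hf_meas hf_loc hm in
lemma m_sub (i j : Fin n) {c d : ℝ} (hc : 0 ≤ c) (hcd : c ≤ d) :
    ∫ w in c..d, f w i * f w j = m d i j - m c i j := by
  rw [m_eq hm i j hc, m_eq hm i j (hc.trans hcd)]
  rw [← intervalIntegral.integral_add_adjacent_intervals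
    (ff_ii hf_meas hf_loc i j le_rfl hc) (ff_ii hf_meas hf_loc i j hc hcd)]
  ring

include hm in
lemma m_symm (t : ℝ) : (m t)ᵀ = m t := by
  ext i j; rw [hm]; simp only [transpose_apply, of_apply]
  congr 1; ext w; ring

include hm hα in
lemma α_symm (t : ℝ) : (α t)ᵀ = α t := by
  rw [hα, transpose_nonsing_inv, m_symm hm]

include hm_inv hα in
lemma αm (t : ℝ) (ht : 0 < t) : α t * m t = 1 := by
  rw [hα]; exact Matrix.nonsing_inv_mul _ ((Matrix.isUnit_iff_isUnit_det _).mp (hm_inv t ht))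

include hm_inv hα in
lemma mα (t : ℝ) (ht : 0 < t) : m t * α t = 1 := by
  rw [hα]; exact Matrix.mul_nonsing_inv _ ((Matrix.isUnit_iff_isUnit_det _).mp (hm_inv t ht))

include hf_meas hf_loc hm in
lemma m_contOn (i j : Fin n) : ContinuousOn (fun t => m t i j) (Ici 0) := by
  intro t ht
  have hb : (0:ℝ) < t + 1 := by have : (0:ℝ) ≤ t := ht; linarith
  have hint : IntegrableOn (fun w => f w i * f w j) (Icc 0 (t+1)) := by
    rw [integrableOn_Icc_iff_integrableOn_Ioc]
    exact ff_int hf_meas hf_loc i j hb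
  have hc : ContinuousOn (fun x => ∫ w in Ioc 0 x, f w i * f w j) (Icc 0 (t+1)) :=
    intervalIntegral.continuousOn_primitive hint
  have hc2 : ContinuousOn (fun x => m x i j) (Icc 0 (t+1)) := by
    refine hc.congr fun x hx => ?_
    rw [hm]; rfl
  have hmem : Icc 0 (t+1) ∈ 𝓝[Ici 0] t := by
    rw [← Ici_inter_Iic]
    exact Filter.inter_mem self_mem_nhdsWithin
      (mem_nhdsWithin_of_mem_nhds (Iic_mem_nhds (by linarith)))
  exact (hc2 t ⟨ht, by linarith⟩).mono_of_mem_nhdsWithin hmem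

include hf_meas hf_loc hm hm_inv hα in
lemma α_contOn : ContinuousOn α (Ioi 0) := by
  have hmc : ContinuousOn m (Ioi 0) := by
    have : ContinuousOn (fun t => (m t : Fin n → Fin n → ℝ)) (Ioi 0) := by
      refine continuousOn_pi.2 fun i => continuousOn_pi.2 fun j => ?_
      exact (m_contOn hf_meas hf_loc hm i j).mono Ioi_subset_Ici_self
    exact this
  have hdet : ContinuousOn (fun t => (m t).det) (Ioi 0) :=
    (continuous_id.matrix_det).comp_continuousOn hmc
  have hdet0 : ∀ t ∈ Ioi (0:ℝ), (m t).det ≠ 0 := fun t ht =>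
    ((Matrix.isUnit_iff_isUnit_det _).mp (hm_inv t ht)).ne_zero
  have hadj : ContinuousOn (fun t => (m t).adjugate) (Ioi 0) :=
    (continuous_id.matrix_adjugate).comp_continuousOn hmc
  have : ContinuousOn (fun t => ((m t).det)⁻¹ • (m t).adjugate) (Ioi 0) :=
    (hdet.inv₀ hdet0).smul hadj
  refine this.congr fun t ht => ?_
  rw [hα, Matrix.inv_def, Ring.inverse_eq_inv']

lemma mv_dot {n : ℕ} {A : Matrix (Fin n) (Fin n) ℝ} (hA : Aᵀ = A) (u v : Fin n → ℝ) :
    (A *ᵥ u) ⬝ᵥ v = u ⬝ᵥ (A *ᵥ v) := by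
  rw [dotProduct_comm, dotProduct_mulVec, ← mulVec_transpose, hA, dotProduct_comm]

lemma dot_expand {n : ℕ} (p q v : Fin n → ℝ) :
    (p ⬝ᵥ v) * (q ⬝ᵥ v) = ∑ ij : Fin n × Fin n, p ij.1 * q ij.2 * (v ij.1 * v ij.2) := by
  rw [Fintype.sum_prod_type]
  unfold dotProduct
  rw [Finset.sum_mul_sum]
  refine Finset.sum_congr rfl fun i _ => Finset.sum_congr rfl fun j _ => by ring

lemma sum_to_matrix {n : ℕ} (p q : Fin n → ℝ) (M : Matrix (Fin n) (Fin n) ℝ) :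
    ∑ ij : Fin n × Fin n, p ij.1 * q ij.2 * M ij.1 ij.2 = p ⬝ᵥ (M *ᵥ q) := by
  rw [Fintype.sum_prod_type]
  unfold dotProduct Matrix.mulVec dotProduct
  simp only [Finset.mul_sum]
  refine Finset.sum_congr rfl fun i _ => Finset.sum_congr rfl fun j _ => by ring

include hf_meas hf_loc hm hm_inv hα in
include hf_meas hf_loc hm in
lemma key2' (p q : Fin n → ℝ) {c d : ℝ} (hc0 : 0 ≤ c) (hcd : c ≤ d) :
    ∫ w in c..d, (p ⬝ᵥ f w) * (q ⬝ᵥ f w) = p ⬝ᵥ ((m d - m c) *ᵥ q) := by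
  have h1 : (∫ w in c..d, (p ⬝ᵥ f w) * (q ⬝ᵥ f w))
      = ∑ ij : Fin n × Fin n, p ij.1 * q ij.2 * (m d ij.1 ij.2 - m c ij.1 ij.2) := by
    rw [intervalIntegral.integral_congr (g := fun w =>
        ∑ ij : Fin n × Fin n, p ij.1 * q ij.2 * (f w ij.1 * f w ij.2))
        (fun w _ => dot_expand p q (f w))]
    rw [intervalIntegral.integral_finset_sum
      (f := fun (ij : Fin n × Fin n) w => p ij.1 * q ij.2 * (f w ij.1 * f w ij.2))
      (fun ij _ =>
      (ff_ii hf_meas hf_loc ij.1 ij.2 hc0 hcd).const_mul (p ij.1 * q ij.2))]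
    refine Finset.sum_congr rfl fun ij _ => ?_
    rw [intervalIntegral.integral_const_mul, m_sub hf_meas hf_loc hm ij.1 ij.2 hc0 hcd]
  rw [h1, ← sum_to_matrix]
  refine Finset.sum_congr rfl fun ij _ => by rw [Matrix.sub_apply]

include hf_meas hf_loc hm hm_inv hα in
lemma key2 (x y : Fin n → ℝ) {c d : ℝ} (hc : 0 < c) (hcd : c ≤ d) :
    ∫ w in c..d, ((α c *ᵥ x) ⬝ᵥ f w) * ((α d *ᵥ y) ⬝ᵥ f w)
      = x ⬝ᵥ (α c *ᵥ y) - x ⬝ᵥ (α d *ᵥ y) := by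
  have hd : 0 < d := lt_of_lt_of_le hc hcd
  rw [key2' hf_meas hf_loc hm hm_inv hα (α c *ᵥ x) (α d *ᵥ y) hc.le hcd]
  rw [Matrix.sub_mulVec, dotProduct_sub]
  have h3 : (α c *ᵥ x) ⬝ᵥ (m d *ᵥ (α d *ᵥ y)) = x ⬝ᵥ (α c *ᵥ y) := by
    rw [mulVec_mulVec, mα hm_inv hα d hd, one_mulVec, mv_dot (α_symm hm hα c)]
  have h4 : (α c *ᵥ x) ⬝ᵥ (m c *ᵥ (α d *ᵥ y)) = x ⬝ᵥ (α d *ᵥ y) := by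
    rw [← mv_dot (m_symm hm c), mulVec_mulVec, mα hm_inv hα c hc, one_mulVec]
  rw [h3, h4]

lemma dot_bound (p q v : Fin n → ℝ) :
    |(p ⬝ᵥ v) * (q ⬝ᵥ v)| ≤ (∑ i, |p i|) * (∑ i, |q i|) * (∑ i, (v i)^2) := by
  have hS : ∀ i j, |v i| * |v j| ≤ ∑ k, (v k)^2 := by
    intro i j
    rcases le_total (|v i|) (|v j|) with h | h
    · calc |v i| * |v j| ≤ |v j| * |v j| :=
            mul_le_mul_of_nonneg_right h (abs_nonneg _)
        _ = (v j)^2 := by rw [← sq_abs (v j)]; ring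
        _ ≤ ∑ k, (v k)^2 := Finset.single_le_sum (f := fun k => (v k)^2)
            (fun k _ => sq_nonneg _) (Finset.mem_univ j)
    · calc |v i| * |v j| ≤ |v i| * |v i| :=
            mul_le_mul_of_nonneg_left h (abs_nonneg _)
        _ = (v i)^2 := by rw [← sq_abs (v i)]; ring
        _ ≤ ∑ k, (v k)^2 := Finset.single_le_sum (f := fun k => (v k)^2)
            (fun k _ => sq_nonneg _) (Finset.mem_univ i)
  calc |(p ⬝ᵥ v) * (q ⬝ᵥ v)| = |p ⬝ᵥ v| * |q ⬝ᵥ v| := abs_mul _ _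
    _ ≤ (∑ i, |p i| * |v i|) * (∑ i, |q i| * |v i|) := by
        refine mul_le_mul ?_ ?_ (abs_nonneg _) (Finset.sum_nonneg fun i _ =>
          mul_nonneg (abs_nonneg _) (abs_nonneg _))
        · refine le_trans (Finset.abs_sum_le_sum_abs _ _) ?_
          exact le_of_eq (Finset.sum_congr rfl fun i _ => abs_mul _ _)
        · refine le_trans (Finset.abs_sum_le_sum_abs _ _) ?_
          exact le_of_eq (Finset.sum_congr rfl fun i _ => abs_mul _ _)
    _ = ∑ i, ∑ j, (|p i| * |v i|) * (|q j| * |v j|) := Finset.sum_mul_sum _ _ _ _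
    _ ≤ ∑ i, ∑ j, (|p i| * |q j|) * (∑ k, (v k)^2) := by
        refine Finset.sum_le_sum fun i _ => Finset.sum_le_sum fun j _ => ?_
        have : (|p i| * |v i|) * (|q j| * |v j|) = (|p i| * |q j|) * (|v i| * |v j|) := by ring
        rw [this]
        exact mul_le_mul_of_nonneg_left (hS i j) (mul_nonneg (abs_nonneg _) (abs_nonneg _))
    _ = (∑ i, |p i|) * (∑ i, |q i|) * (∑ i, (v i)^2) := by
        simp only [← Finset.sum_mul, ← Finset.mul_sum]

lemma sumabs_mulVec (M : Matrix (Fin n) (Fin n) ℝ) (x : Fin n → ℝ) {C : ℝ}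
    (hC : ∀ i j, |M i j| ≤ C) :
    ∑ i, |(M *ᵥ x) i| ≤ (n : ℝ) * C * ∑ j, |x j| := by
  have h1 : ∀ i, |(M *ᵥ x) i| ≤ C * ∑ j, |x j| := by
    intro i
    calc |(M *ᵥ x) i| = |∑ j, M i j * x j| := by simp [Matrix.mulVec, dotProduct]
      _ ≤ ∑ j, |M i j * x j| := Finset.abs_sum_le_sum_abs _ _
      _ ≤ ∑ j, C * |x j| := by
          refine Finset.sum_le_sum fun j _ => ?_
          rw [abs_mul]
          exact mul_le_mul_of_nonneg_right (hC i j) (abs_nonneg _)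
      _ = C * ∑ j, |x j| := by rw [Finset.mul_sum]
  calc ∑ i, |(M *ᵥ x) i| ≤ ∑ _i : Fin n, C * ∑ j, |x j| := Finset.sum_le_sum fun i _ => h1 i
    _ = (n : ℝ) * C * ∑ j, |x j| := by
        rw [Finset.sum_const, Finset.card_univ, Fintype.card_fin]
        simp [nsmul_eq_mul, mul_assoc]

include hf_meas hf_loc hm hm_inv hα in
lemma α_entry_contOn (i j : Fin n) : ContinuousOn (fun w => α w i j) (Ioi 0) := by
  have h := α_contOn hf_meas hf_loc hm hm_inv hα
  have h2 : Continuous (fun M : Matrix (Fin n) (Fin n) ℝ => M i j) :=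
    (continuous_apply j).comp (continuous_apply i)
  exact h2.comp_continuousOn h

include hf_meas hf_loc hm hm_inv hα in
lemma Fdot_aesm (x : Fin n → ℝ) {s : Set ℝ} (hs : MeasurableSet s) (hsub : s ⊆ Ioi 0) :
    AEMeasurable (fun w => (α w *ᵥ x) ⬝ᵥ f w) (volume.restrict s) := by
  have hα' : ∀ i j, AEMeasurable (fun w => α w i j) (volume.restrict s) := fun i j =>
    ((α_entry_contOn hf_meas hf_loc hm hm_inv hα i j).mono hsub).aemeasurable hs
  have : (fun w => (α w *ᵥ x) ⬝ᵥ f w)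
      = fun w => ∑ i, (∑ j, α w i j * x j) * f w i := by
    funext w; simp [dotProduct, Matrix.mulVec, dotProduct]
  rw [this]
  refine Finset.aemeasurable_fun_sum _ fun i _ => ?_
  exact (Finset.aemeasurable_fun_sum _ fun j _ =>
    (hα' i j).mul aemeasurable_const).mul (hf_meas i).aemeasurable

include hf_loc in
lemma S_int {b : ℝ} (hb : 0 < b) :
    IntegrableOn (fun w => ∑ k, (f w k)^2) (Ioc 0 b) :=
  MeasureTheory.integrable_finset_sum _ fun k _ => hf_loc k b hb

include hf_meas hf_loc hm hm_inv hα in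
lemma alpha_bound {a b : ℝ} (ha : 0 < a) :
    ∃ C : ℝ, 0 ≤ C ∧ ∀ u ∈ Icc a b, ∀ i j, |α u i j| ≤ C := by
  have hsub : Icc a b ⊆ Ioi 0 := fun u hu => lt_of_lt_of_le ha hu.1
  have hg : ContinuousOn (fun u => (fun p : Fin n × Fin n => α u p.1 p.2)) (Icc a b) := by
    refine continuousOn_pi.2 fun p => ?_
    exact (α_entry_contOn hf_meas hf_loc hm hm_inv hα p.1 p.2).mono hsub
  obtain ⟨C, hC⟩ := (isCompact_Icc).exists_bound_of_continuousOn hg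
  rcases le_or_gt a b with hab | hab
  · refine ⟨C, ?_, ?_⟩
    · exact le_trans (norm_nonneg _) (hC a ⟨le_rfl, hab⟩)
    · intro u hu i j
      have := hC u hu
      calc |α u i j| ≤ ‖fun p : Fin n × Fin n => α u p.1 p.2‖ := by
            have := norm_le_pi_norm (fun p : Fin n × Fin n => α u p.1 p.2) (i, j)
            simpa using this
        _ ≤ C := hC u hu
  · exact ⟨0, le_rfl, fun u hu => absurd (hu.1.trans hu.2) (not_le.2 hab)⟩

include hf_meas hf_loc hm hm_inv hα in
lemma keyF_int (x y : Fin n → ℝ) {a b : ℝ} (ha : 0 < a) :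
    IntegrableOn (fun w => ((α w *ᵥ x) ⬝ᵥ f w) * ((α w *ᵥ y) ⬝ᵥ f w)) (Ioc a b) := by
  rcases le_or_gt b a with hba | hab
  · rw [Ioc_eq_empty (not_lt.2 hba)]; exact integrableOn_empty
  obtain ⟨C, hC0, hC⟩ := alpha_bound hf_meas hf_loc hm hm_inv hα (b := b) ha
  have hsub : Ioc a b ⊆ Ioc 0 b := Ioc_subset_Ioc_left ha.le
  have hSint : IntegrableOn (fun w => ∑ k, (f w k)^2) (Ioc a b) :=
    (S_int hf_loc (ha.trans hab)).mono_set hsub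
  refine Integrable.mono' (hSint.const_mul
    (((n : ℝ) * C * ∑ i, |x i|) * ((n : ℝ) * C * ∑ i, |y i|))) ?_ ?_
  · exact ((Fdot_aesm hf_meas hf_loc hm hm_inv hα x measurableSet_Ioc
      (fun w hw => lt_of_lt_of_le ha hw.1.le)).mul
      (Fdot_aesm hf_meas hf_loc hm hm_inv hα y measurableSet_Ioc
      (fun w hw => lt_of_lt_of_le ha hw.1.le))).aestronglyMeasurable
  · rw [ae_restrict_iff' measurableSet_Ioc]
    refine Filter.Eventually.of_forall fun w hw => ?_
    have hwmem : w ∈ Icc a b := ⟨hw.1.le, hw.2⟩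
    rw [Real.norm_eq_abs]
    calc |((α w *ᵥ x) ⬝ᵥ f w) * ((α w *ᵥ y) ⬝ᵥ f w)|
        ≤ (∑ i, |(α w *ᵥ x) i|) * (∑ i, |(α w *ᵥ y) i|) * (∑ i, (f w i)^2) :=
          dot_bound _ _ _
      _ ≤ ((n : ℝ) * C * ∑ i, |x i|) * ((n : ℝ) * C * ∑ i, |y i|) * (∑ i, (f w i)^2) := by
          have hx := sumabs_mulVec (α w) x (fun i j => hC w hwmem i j)
          have hy := sumabs_mulVec (α w) y (fun i j => hC w hwmem i j)
          have h3 : (∑ i, |(α w *ᵥ x) i|) * (∑ i, |(α w *ᵥ y) i|)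
              ≤ ((n : ℝ) * C * ∑ i, |x i|) * ((n : ℝ) * C * ∑ i, |y i|) := by
            refine mul_le_mul hx hy (Finset.sum_nonneg fun i _ => abs_nonneg _) ?_
            have : (0:ℝ) ≤ ∑ i, |x i| := Finset.sum_nonneg fun i _ => abs_nonneg _
            positivity
          exact mul_le_mul_of_nonneg_right h3 (Finset.sum_nonneg fun i _ => sq_nonneg _)

include hf_meas hf_loc in
lemma pq_int (p q : Fin n → ℝ) {c d : ℝ} (hc : 0 ≤ c) (hcd : c ≤ d) :
    IntervalIntegrable (fun w => (p ⬝ᵥ f w) * (q ⬝ᵥ f w)) volume c d := by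
  have hrw : (fun w => (p ⬝ᵥ f w) * (q ⬝ᵥ f w))
      = fun w => ∑ ij : Fin n × Fin n, p ij.1 * q ij.2 * (f w ij.1 * f w ij.2) :=
    funext fun w => dot_expand p q (f w)
  rw [hrw, intervalIntegrable_iff_integrableOn_Ioc_of_le hcd]
  refine MeasureTheory.integrable_finset_sum _ fun ij _ => ?_
  have h2 := ff_ii hf_meas hf_loc ij.1 ij.2 hc hcd
  rw [intervalIntegrable_iff_integrableOn_Ioc_of_le hcd] at h2
  exact h2.const_mul _

set_option maxHeartbeats 1000000 in
include hf_meas hf_loc hm hm_inv hα in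
lemma key3 (x y : Fin n → ℝ) {a b : ℝ} (ha : 0 < a) (hab : a ≤ b) :
    ∫ w in a..b, ((α w *ᵥ x) ⬝ᵥ f w) * ((α w *ᵥ y) ⬝ᵥ f w)
      = x ⬝ᵥ (α a *ᵥ y) - x ⬝ᵥ (α b *ᵥ y) := by
  rcases eq_or_lt_of_le hab with rfl | hab'
  · simp
  have hb : 0 < b := ha.trans hab'
  set F : ℝ → ℝ := fun w => ((α w *ᵥ x) ⬝ᵥ f w) * ((α w *ᵥ y) ⬝ᵥ f w) with hF
  set S : ℝ → ℝ := fun w => ∑ k, (f w k)^2 with hSdef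
  set Φ : ℝ → ℝ := fun v => x ⬝ᵥ (α v *ᵥ y) with hΦ
  obtain ⟨C, hC0, hC⟩ := alpha_bound hf_meas hf_loc hm hm_inv hα (b := b) ha
  set X := ∑ i, |x i| with hX
  set Y := ∑ i, |y i| with hY
  have hX0 : 0 ≤ X := Finset.sum_nonneg fun i _ => abs_nonneg _
  have hY0 : 0 ≤ Y := Finset.sum_nonneg fun i _ => abs_nonneg _
  have hS0 : ∀ w, 0 ≤ S w := fun w => Finset.sum_nonneg fun k _ => sq_nonneg _
  have hsubI : Icc a b ⊆ Ioi (0:ℝ) := fun v hv => lt_of_lt_of_le ha hv.1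
  have hgc : ContinuousOn (fun v => (fun p : Fin n × Fin n => α v p.1 p.2)) (Icc a b) := by
    refine continuousOn_pi.2 fun p => ?_
    exact (α_entry_contOn hf_meas hf_loc hm hm_inv hα p.1 p.2).mono hsubI
  have hguc := isCompact_Icc.uniformContinuousOn_of_continuous hgc
  have hSint : ∀ {c d : ℝ}, a ≤ c → c ≤ d → IntervalIntegrable S volume c d := by
    intro c d hc hcd
    rw [intervalIntegrable_iff_integrableOn_Ioc_of_le hcd]
    exact (S_int hf_loc (lt_of_lt_of_le (ha.trans_le hc) hcd)).mono_set
      (Ioc_subset_Ioc_left (ha.trans_le hc).le)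
  set B : ℝ := 2*(n:ℝ)^2*C*X*Y with hB
  have hB0 : 0 ≤ B := by positivity
  set M : ℝ := B * ∫ w in a..b, S w with hM
  have hM0 : 0 ≤ M := by
    have h0 : (0:ℝ) ≤ ∫ w in a..b, S w :=
      intervalIntegral.integral_nonneg hab (fun w _ => hS0 w)
    positivity
  have claim : ∀ ε > 0, |(∫ w in a..b, F w) - (Φ a - Φ b)| ≤ ε * M := by
    intro ε hε
    obtain ⟨δ, hδ0, hδ⟩ := Metric.uniformContinuousOn_iff.1 hguc ε hε
    obtain ⟨K, hK⟩ := exists_nat_gt ((b - a)/δ)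
    have hKpos : 0 < (K:ℝ) := lt_of_le_of_lt (div_nonneg (by linarith) hδ0.le) hK
    have hmesh : (b - a)/K < δ := by
      rw [div_lt_iff₀ hKpos]
      have h2 := (div_lt_iff₀ hδ0).1 hK
      linarith
    have hmesh0 : 0 ≤ (b - a)/K := div_nonneg (by linarith) hKpos.le
    set u : ℕ → ℝ := fun i => a + i * ((b-a)/K) with hu
    have hstep : ∀ i : ℕ, u (i+1) - u i = (b-a)/K := by
      intro i; simp only [hu]; push_cast; ring
    have hua : ∀ i : ℕ, a ≤ u i := fun i =>
      le_add_of_nonneg_right (mul_nonneg i.cast_nonneg hmesh0)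
    have hu0 : u 0 = a := by simp [hu]
    have huK : u K = b := by
      simp only [hu]
      field_simp
      ring
    have hub : ∀ i, i ≤ K → u i ≤ b := by
      intro i hi
      have h2 : (i:ℝ) ≤ K := Nat.cast_le.2 hi
      have h3 := mul_le_mul_of_nonneg_right h2 hmesh0
      rw [← huK]
      simp only [hu]
      linarith
    clear_value u
    have humono : ∀ i, u i ≤ u (i+1) := fun i => by
      have := hstep i; linarith
    have hupos : ∀ i, 0 < u i := fun i => lt_of_lt_of_le ha (hua i)
    have hFii : ∀ i, IntervalIntegrable F volume (u i) (u (i+1)) := fun i => by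
      rw [intervalIntegrable_iff_integrableOn_Ioc_of_le (humono i)]
      exact keyF_int hf_meas hf_loc hm hm_inv hα x y (hupos i)
    have hHii : ∀ i, IntervalIntegrable
        (fun w => ((α (u i) *ᵥ x) ⬝ᵥ f w) * ((α (u (i+1)) *ᵥ y) ⬝ᵥ f w))
        volume (u i) (u (i+1)) := fun i =>
      pq_int hf_meas hf_loc _ _ (hupos i).le (humono i)
    have htel : Φ a - Φ b = ∑ i ∈ Finset.range K, (Φ (u i) - Φ (u (i+1))) := by
      rw [Finset.sum_range_sub' (fun i => Φ (u i)) K, hu0, huK]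
    have heach : ∀ i ∈ Finset.range K, Φ (u i) - Φ (u (i+1))
        = ∫ w in u i..u (i+1), ((α (u i) *ᵥ x) ⬝ᵥ f w) * ((α (u (i+1)) *ᵥ y) ⬝ᵥ f w) :=
      fun i _ => (key2 hf_meas hf_loc hm hm_inv hα x y (hupos i) (humono i)).symm
    have hsplit : ∫ w in a..b, F w = ∑ i ∈ Finset.range K, ∫ w in u i..u (i+1), F w := by
      rw [intervalIntegral.sum_integral_adjacent_intervals (fun i _ => hFii i), hu0, huK]
    have hbound : ∀ i ∈ Finset.range K,
        |(∫ w in u i..u (i+1), F w)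
          - ∫ w in u i..u (i+1), ((α (u i) *ᵥ x) ⬝ᵥ f w) * ((α (u (i+1)) *ᵥ y) ⬝ᵥ f w)|
        ≤ ε * B * ∫ w in u i..u (i+1), S w := by
      intro i hi
      have hi' : i < K := Finset.mem_range.1 hi
      rw [← intervalIntegral.integral_sub (hFii i) (hHii i)]
      refine le_trans (intervalIntegral.abs_integral_le_integral_abs (humono i)) ?_
      have hptw : ∀ w ∈ Icc (u i) (u (i+1)),
          |F w - ((α (u i) *ᵥ x) ⬝ᵥ f w) * ((α (u (i+1)) *ᵥ y) ⬝ᵥ f w)| ≤ ε * B * S w := by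
        intro w hw
        have hwab : w ∈ Icc a b := ⟨(hua i).trans hw.1, hw.2.trans (hub (i+1) hi')⟩
        have huiab : u i ∈ Icc a b := ⟨hua i, hub i hi'.le⟩
        have hui1ab : u (i+1) ∈ Icc a b := ⟨hua (i+1), hub (i+1) hi'⟩
        have hd1 : dist w (u i) < δ := by
          rw [Real.dist_eq, abs_of_nonneg (by linarith [hw.1])]
          have := hstep i
          linarith [hw.1, hw.2]
        have hd2 : dist w (u (i+1)) < δ := by
          rw [Real.dist_eq, abs_of_nonpos (by linarith [hw.2])]
          have := hstep i
          linarith [hw.1, hw.2]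
        have hent1 : ∀ i' j', |α w i' j' - α (u i) i' j'| ≤ ε := by
          intro i' j'
          have h3 := hδ w hwab (u i) huiab hd1
          have h4 := dist_le_pi_dist (fun p : Fin n × Fin n => α w p.1 p.2)
            (fun p : Fin n × Fin n => α (u i) p.1 p.2) (i', j')
          rw [Real.dist_eq] at h4
          exact le_of_lt (lt_of_le_of_lt h4 h3)
        have hent2 : ∀ i' j', |α w i' j' - α (u (i+1)) i' j'| ≤ ε := by
          intro i' j'
          have h3 := hδ w hwab (u (i+1)) hui1ab hd2
          have h4 := dist_le_pi_dist (fun p : Fin n × Fin n => α w p.1 p.2)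
            (fun p : Fin n × Fin n => α (u (i+1)) p.1 p.2) (i', j')
          rw [Real.dist_eq] at h4
          exact le_of_lt (lt_of_le_of_lt h4 h3)
        have hsplit2 : F w - ((α (u i) *ᵥ x) ⬝ᵥ f w) * ((α (u (i+1)) *ᵥ y) ⬝ᵥ f w)
            = (((α w - α (u i)) *ᵥ x) ⬝ᵥ f w) * ((α w *ᵥ y) ⬝ᵥ f w)
              + ((α (u i) *ᵥ x) ⬝ᵥ f w) * (((α w - α (u (i+1))) *ᵥ y) ⬝ᵥ f w) := by
          simp only [hF, Matrix.sub_mulVec, sub_dotProduct]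
          ring
        have hb1 : |(((α w - α (u i)) *ᵥ x) ⬝ᵥ f w) * ((α w *ᵥ y) ⬝ᵥ f w)|
            ≤ ((n:ℝ) * ε * X) * ((n:ℝ) * C * Y) * S w := by
          refine le_trans (dot_bound _ _ _) ?_
          have h5 := sumabs_mulVec (α w - α (u i)) x
            (C := ε) (fun i' j' => by rw [Matrix.sub_apply]; exact hent1 i' j')
          have h6 := sumabs_mulVec (α w) y (C := C) (fun i' j' => hC w hwab i' j')
          have h7 : (∑ i', |((α w - α (u i)) *ᵥ x) i'|) * (∑ i', |(α w *ᵥ y) i'|)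
              ≤ ((n:ℝ) * ε * X) * ((n:ℝ) * C * Y) := by
            refine mul_le_mul h5 h6 (Finset.sum_nonneg fun i' _ => abs_nonneg _) ?_
            positivity
          exact mul_le_mul_of_nonneg_right h7 (hS0 w)
        have hb2 : |((α (u i) *ᵥ x) ⬝ᵥ f w) * (((α w - α (u (i+1))) *ᵥ y) ⬝ᵥ f w)|
            ≤ ((n:ℝ) * C * X) * ((n:ℝ) * ε * Y) * S w := by
          refine le_trans (dot_bound _ _ _) ?_
          have h5 := sumabs_mulVec (α (u i)) x (C := C) (fun i' j' => hC (u i) huiab i' j')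
          have h6 := sumabs_mulVec (α w - α (u (i+1))) y
            (C := ε) (fun i' j' => by rw [Matrix.sub_apply]; exact hent2 i' j')
          have h7 : (∑ i', |(α (u i) *ᵥ x) i'|) * (∑ i', |((α w - α (u (i+1))) *ᵥ y) i'|)
              ≤ ((n:ℝ) * C * X) * ((n:ℝ) * ε * Y) := by
            refine mul_le_mul h5 h6 (Finset.sum_nonneg fun i' _ => abs_nonneg _) ?_
            positivity
          exact mul_le_mul_of_nonneg_right h7 (hS0 w)
        calc |F w - ((α (u i) *ᵥ x) ⬝ᵥ f w) * ((α (u (i+1)) *ᵥ y) ⬝ᵥ f w)|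
            ≤ |(((α w - α (u i)) *ᵥ x) ⬝ᵥ f w) * ((α w *ᵥ y) ⬝ᵥ f w)|
              + |((α (u i) *ᵥ x) ⬝ᵥ f w) * (((α w - α (u (i+1))) *ᵥ y) ⬝ᵥ f w)| := by
              rw [hsplit2]; exact abs_add_le _ _
          _ ≤ ((n:ℝ) * ε * X) * ((n:ℝ) * C * Y) * S w
              + ((n:ℝ) * C * X) * ((n:ℝ) * ε * Y) * S w := add_le_add hb1 hb2
          _ = ε * B * S w := by rw [hB]; ring
      calc (∫ w in u i..u (i+1),
            |F w - ((α (u i) *ᵥ x) ⬝ᵥ f w) * ((α (u (i+1)) *ᵥ y) ⬝ᵥ f w)|)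
          ≤ ∫ w in u i..u (i+1), ε * B * S w := by
            refine intervalIntegral.integral_mono_on (humono i)
              ((hFii i).sub (hHii i)).abs (((hSint (hua i)
                (humono i)).const_mul (ε * B))) hptw
        _ = ε * B * ∫ w in u i..u (i+1), S w := intervalIntegral.integral_const_mul _ _
    calc |(∫ w in a..b, F w) - (Φ a - Φ b)|
        = |∑ i ∈ Finset.range K, ((∫ w in u i..u (i+1), F w)
            - ∫ w in u i..u (i+1), ((α (u i) *ᵥ x) ⬝ᵥ f w) * ((α (u (i+1)) *ᵥ y) ⬝ᵥ f w))| := by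
          rw [hsplit, htel, ← Finset.sum_sub_distrib]
          congr 1
          exact Finset.sum_congr rfl fun i hi => by rw [heach i hi]
      _ ≤ ∑ i ∈ Finset.range K, |(∫ w in u i..u (i+1), F w)
            - ∫ w in u i..u (i+1), ((α (u i) *ᵥ x) ⬝ᵥ f w) * ((α (u (i+1)) *ᵥ y) ⬝ᵥ f w)| :=
          Finset.abs_sum_le_sum_abs _ _
      _ ≤ ∑ i ∈ Finset.range K, ε * B * ∫ w in u i..u (i+1), S w :=
          Finset.sum_le_sum hbound
      _ = ε * B * ∑ i ∈ Finset.range K, ∫ w in u i..u (i+1), S w := by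
          rw [Finset.mul_sum]
      _ = ε * M := by
          rw [intervalIntegral.sum_integral_adjacent_intervals
            (fun i _ => hSint (hua i) (humono i)), hu0, huK, hM]
          ring
  have habs : |(∫ w in a..b, F w) - (Φ a - Φ b)| ≤ 0 := by
    refine le_of_forall_pos_le_add fun ε hε => ?_
    have h1 := claim (ε/(M+1)) (by positivity)
    have h2 : ε/(M+1) * M ≤ ε := by
      rw [div_mul_eq_mul_div, div_le_iff₀ (by positivity)]
      nlinarith
    linarith
  have := abs_nonpos_iff.1 habs
  have h9 := sub_eq_zero.1 this
  rw [h9]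

include hf_meas hf_loc hm hm_inv hα in
lemma α_psd (z : Fin n → ℝ) {T : ℝ} (hT : 0 < T) : 0 ≤ z ⬝ᵥ (α T *ᵥ z) := by
  have h1 : z ⬝ᵥ (α T *ᵥ z) = (α T *ᵥ z) ⬝ᵥ (m T *ᵥ (α T *ᵥ z)) := by
    rw [mulVec_mulVec, mα hm_inv hα T hT, one_mulVec, dotProduct_comm]
  have hm0 : m 0 = 0 := by
    rw [hm]; ext i j; simp
  have h2 := key2' hf_meas hf_loc hm hm_inv hα (α T *ᵥ z) (α T *ᵥ z) le_rfl hT.le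
  rw [hm0, sub_zero] at h2
  rw [h1, ← h2]
  exact intervalIntegral.integral_nonneg hT.le fun w _ => mul_self_nonneg _

end GV

/-- For all 0 < s ≤ t < ∞, the Goursat–Volterra kernel k satisfies the self-reproduction
property k(t,s) = ∫_t^∞ k(u,t)·k(u,s) du + f(t)ᵀ·α_∞·f(s), where the improper integral
converges. -/
theorem kernel_self_reproduction_at_infinity
    (n : ℕ) (hn : 1 ≤ n)
    (f : ℝ → Fin n → ℝ)
    (hf_meas : ∀ i, Measurable fun s => f s i)
    (hf_loc : ∀ i, ∀ t > (0 : ℝ), IntegrableOn (fun s => (f s i) ^ 2) (Set.Ioc 0 t))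
    (m : ℝ → Matrix (Fin n) (Fin n) ℝ)
    (hm : ∀ t, m t = Matrix.of fun i j => ∫ s in Set.Ioc 0 t, f s i * f s j)
    (hm_inv : ∀ t > (0 : ℝ), IsUnit (m t))
    (α : ℝ → Matrix (Fin n) (Fin n) ℝ)
    (hα : ∀ t, α t = (m t)⁻¹)
    (φ : ℝ → Fin n → ℝ)
    (hφ : ∀ t, φ t = (α t).mulVec (f t))
    (k : ℝ → ℝ → ℝ)
    (hk : ∀ s t : ℝ, 0 < s → s ≤ t → k t s = φ t ⬝ᵥ f s)
    (A : Matrix (Fin n) (Fin n) ℝ)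
    (hA : ∀ i j, Tendsto (fun u => α u i j) atTop (𝓝 (A i j))) :
    ∀ s t : ℝ, 0 < s → s ≤ t →
      IntegrableOn (fun u => k u t * k u s) (Set.Ioi t) ∧
      k t s = (∫ u in Set.Ioi t, k u t * k u s) + f t ⬝ᵥ A.mulVec (f s) := by
  intro s t hs hst
  have ht : 0 < t := lt_of_lt_of_le hs hst
  set F : ℝ → ℝ := fun u => ((α u *ᵥ f t) ⬝ᵥ f u) * ((α u *ᵥ f s) ⬝ᵥ f u) with hF
  have hswap : ∀ u v : ℝ, (α u *ᵥ f u) ⬝ᵥ f v = (α u *ᵥ f v) ⬝ᵥ f u := fun u v => by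
    rw [mv_dot (α_symm hm hα u), dotProduct_comm]
  have hkeq : ∀ u ∈ Ioi t, k u t * k u s = F u := by
    intro u hu
    have hu' : t ≤ u := le_of_lt hu
    rw [hk t u ht hu', hk s u hs (hst.trans hu'), hφ u, hF]
    rw [hswap u t, hswap u s]
  -- interval values
  have hval : ∀ T : ℝ, t ≤ T → ∫ w in t..T, F w
      = f t ⬝ᵥ (α t *ᵥ f s) - f t ⬝ᵥ (α T *ᵥ f s) :=
    fun T hT => key3 hf_meas hf_loc hm hm_inv hα (f t) (f s) ht hT
  have hvalx : ∀ T : ℝ, t ≤ T → ∫ w in t..T, ((α w *ᵥ f t) ⬝ᵥ f w) * ((α w *ᵥ f t) ⬝ᵥ f w)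
      = f t ⬝ᵥ (α t *ᵥ f t) - f t ⬝ᵥ (α T *ᵥ f t) :=
    fun T hT => key3 hf_meas hf_loc hm hm_inv hα (f t) (f t) ht hT
  have hvaly : ∀ T : ℝ, t ≤ T → ∫ w in t..T, ((α w *ᵥ f s) ⬝ᵥ f w) * ((α w *ᵥ f s) ⬝ᵥ f w)
      = f s ⬝ᵥ (α t *ᵥ f s) - f s ⬝ᵥ (α T *ᵥ f s) :=
    fun T hT => key3 hf_meas hf_loc hm hm_inv hα (f s) (f s) ht hT
  set I : ℝ := (f t ⬝ᵥ (α t *ᵥ f t) + f s ⬝ᵥ (α t *ᵥ f s)) / 2 with hI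
  have hFIoc : ∀ T : ℝ, IntegrableOn F (Ioc t T) :=
    fun T => keyF_int hf_meas hf_loc hm hm_inv hα (f t) (f s) ht
  have hFii : ∀ T : ℝ, t ≤ T → IntervalIntegrable F volume t T := fun T hT => by
    rw [intervalIntegrable_iff_integrableOn_Ioc_of_le hT]; exact hFIoc T
  have hxii : ∀ T : ℝ, t ≤ T → IntervalIntegrable
      (fun w => ((α w *ᵥ f t) ⬝ᵥ f w) * ((α w *ᵥ f t) ⬝ᵥ f w)) volume t T := fun T hT => by
    rw [intervalIntegrable_iff_integrableOn_Ioc_of_le hT]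
    exact keyF_int hf_meas hf_loc hm hm_inv hα (f t) (f t) ht
  have hyii : ∀ T : ℝ, t ≤ T → IntervalIntegrable
      (fun w => ((α w *ᵥ f s) ⬝ᵥ f w) * ((α w *ᵥ f s) ⬝ᵥ f w)) volume t T := fun T hT => by
    rw [intervalIntegrable_iff_integrableOn_Ioc_of_le hT]
    exact keyF_int hf_meas hf_loc hm hm_inv hα (f s) (f s) ht
  have hnormbdd : ∀ T : ℝ, t ≤ T → (∫ w in t..T, ‖F w‖) ≤ I := by
    intro T hT
    have hptw : ∀ w ∈ Icc t T, ‖F w‖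
        ≤ (((α w *ᵥ f t) ⬝ᵥ f w) * ((α w *ᵥ f t) ⬝ᵥ f w)
          + ((α w *ᵥ f s) ⬝ᵥ f w) * ((α w *ᵥ f s) ⬝ᵥ f w)) / 2 := by
      intro w _
      rw [Real.norm_eq_abs, hF]
      set p := (α w *ᵥ f t) ⬝ᵥ f w
      set q := (α w *ᵥ f s) ⬝ᵥ f w
      rw [abs_mul]
      nlinarith [abs_nonneg p, abs_nonneg q, sq_abs p, sq_abs q, sq_nonneg (|p| - |q|)]
    calc (∫ w in t..T, ‖F w‖)
        ≤ ∫ w in t..T, (((α w *ᵥ f t) ⬝ᵥ f w) * ((α w *ᵥ f t) ⬝ᵥ f w)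
          + ((α w *ᵥ f s) ⬝ᵥ f w) * ((α w *ᵥ f s) ⬝ᵥ f w)) / 2 := by
          refine intervalIntegral.integral_mono_on hT (hFii T hT).norm
            (((hxii T hT).add (hyii T hT)).div_const 2) hptw
      _ = ((∫ w in t..T, ((α w *ᵥ f t) ⬝ᵥ f w) * ((α w *ᵥ f t) ⬝ᵥ f w))
          + ∫ w in t..T, ((α w *ᵥ f s) ⬝ᵥ f w) * ((α w *ᵥ f s) ⬝ᵥ f w)) / 2 := by
          rw [intervalIntegral.integral_div, intervalIntegral.integral_add
            (hxii T hT) (hyii T hT)]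
      _ ≤ I := by
          rw [hvalx T hT, hvaly T hT, hI]
          have h1 : 0 ≤ f t ⬝ᵥ (α T *ᵥ f t) :=
            α_psd hf_meas hf_loc hm hm_inv hα (f t) (ht.trans_le hT)
          have h2 : 0 ≤ f s ⬝ᵥ (α T *ᵥ f s) :=
            α_psd hf_meas hf_loc hm hm_inv hα (f s) (ht.trans_le hT)
          linarith
  have hFIoi : IntegrableOn F (Ioi t) := by
    refine integrableOn_Ioi_of_intervalIntegral_norm_bounded I t
      (l := (atTop : Filter ℕ)) (b := fun j : ℕ => t + j) (fun j => hFIoc (t + j)) ?_ ?_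
    · exact tendsto_atTop_add_const_left _ t tendsto_natCast_atTop_atTop
    · exact Filter.Eventually.of_forall fun j =>
        hnormbdd (t + j) (le_add_of_nonneg_right j.cast_nonneg)
  have hkint : IntegrableOn (fun u => k u t * k u s) (Ioi t) :=
    hFIoi.congr_fun (fun u hu => (hkeq u hu).symm) measurableSet_Ioi
  refine ⟨hkint, ?_⟩
  -- limit identification
  have hlim1 : Tendsto (fun T => ∫ w in t..T, F w) atTop (𝓝 (∫ w in Ioi t, F w)) :=
    intervalIntegral_tendsto_integral_Ioi t hFIoi tendsto_id
  have hαlim : Tendsto (fun T => f t ⬝ᵥ (α T *ᵥ f s)) atTop (𝓝 (f t ⬝ᵥ (A *ᵥ f s))) := by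
    have hrepr : ∀ M : Matrix (Fin n) (Fin n) ℝ,
        f t ⬝ᵥ (M *ᵥ f s) = ∑ i, f t i * ∑ j, M i j * f s j := by
      intro M; simp [dotProduct, Matrix.mulVec]
    rw [hrepr]
    refine Tendsto.congr (fun T => (hrepr (α T)).symm) ?_
    exact tendsto_finset_sum _ fun i _ => Tendsto.const_mul _
      (tendsto_finset_sum _ fun j _ => (hA i j).mul_const _)
  have hlim2 : Tendsto (fun T => ∫ w in t..T, F w) atTop
      (𝓝 (f t ⬝ᵥ (α t *ᵥ f s) - f t ⬝ᵥ (A *ᵥ f s))) := by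
    refine Tendsto.congr' ?_ (Tendsto.const_sub _ hαlim)
    filter_upwards [eventually_ge_atTop t] with T hT
    exact (hval T hT).symm
  have hIoival : ∫ w in Ioi t, F w = f t ⬝ᵥ (α t *ᵥ f s) - f t ⬝ᵥ (A *ᵥ f s) :=
    tendsto_nhds_unique hlim1 hlim2
  have hks : k t s = f t ⬝ᵥ (α t *ᵥ f s) := by
    rw [hk s t hs hst, hφ t, mv_dot (α_symm hm hα t)]
  have hintcong : ∫ u in Ioi t, k u t * k u s = ∫ w in Ioi t, F w :=
    setIntegral_congr_fun measurableSet_Ioi hkeq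
  rw [hks, hintcong, hIoival]
  ring
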